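/- Let X be a normed vector space over ℂ, let L, U : X → X be continuous linear operators, let N ≥ 2 be an integer with L^N = 0 and U^N = 0 (N-fold composition), and let ρ, γ ≥ 0 be reals such that for all v ∈ X: ‖L(Uv)‖ ≤ ρ‖Uv‖, ‖U(Lv)‖ ≤ ρ‖Lv‖, ‖L(Lv)‖ ≤ γ‖Lv‖, ‖U(Uv)‖ ≤ γ‖Uv‖, ‖Lv‖ ≤ √(γ²+ρ²)‖v‖ and ‖Uv‖ ≤ √(γ²+ρ²)‖v‖. Then for every integer s ≥ 1 and every v ∈ X: ‖(L + U)^{sN} v‖ ≤ 2·√(γ²+ρ²)·(∑_{j=s}^{sN−1} C(sN−1, j)·γ^{sN−1−j}·ρ^j)·‖v‖, where C denotes the binomial coefficient. -/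

import Mathlib

open Finset

section Aux413

variable {X : Type*} [NormedAddCommGroup X] [NormedSpace ℂ X]

/-- The (non-commutative) word in `L, U` indexed by a list of Booleans
(`true ↦ L`, `false ↦ U`). -/
noncomputable def wd413 (L U : X →L[ℂ] X) : List Bool → (X →L[ℂ] X)
  | [] => 1
  | a :: t => (if a then L else U) * wd413 L U t

/-- The number of switches (adjacent unequal pairs) in a Boolean list. -/
def sw413 : List Bool → ℕ
  | [] => 0
  | [_] => 0
  | a :: b :: t => (if a = b then 0 else 1) + sw413 (b :: t)

lemma wd413_append (L U : X →L[ℂ] X) (l₁ l₂ : List Bool) :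
    wd413 L U (l₁ ++ l₂) = wd413 L U l₁ * wd413 L U l₂ := by
  induction l₁ with
  | nil => simp [wd413]
  | cons a t ih => simp [wd413, ih, mul_assoc]

lemma wd413_replicate (L U : X →L[ℂ] X) (n : ℕ) (a : Bool) :
    wd413 L U (List.replicate n a) = (if a then L else U) ^ n := by
  induction n with
  | zero => simp [wd413]
  | succ n ih => rw [List.replicate_succ, pow_succ']; simp [wd413, ih]

lemma sw413_le (a : Bool) (t : List Bool) : sw413 (a :: t) ≤ t.length := by
  induction t generalizing a with
  | nil => simp [sw413]
  | cons b t ih =>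
    have := ih b
    by_cases h : a = b <;> simp [sw413, h] <;> omega

/-- First-run decomposition of a nonempty boolean list. -/
lemma firstRun413 (l : List Bool) (a : Bool) :
    ∃ r l', (a :: l) = List.replicate (r + 1) a ++ l' ∧
      (l' = [] ∨ ∃ b t, l' = b :: t ∧ b ≠ a ∧ sw413 (a :: l) = sw413 l' + 1) := by
  induction l generalizing a with
  | nil => exact ⟨0, [], by simp, Or.inl rfl⟩
  | cons b t ih =>
    by_cases h : a = b
    · subst h
      obtain ⟨r, l', hdec, hrest⟩ := ih a
      refine ⟨r + 1, l', ?_, ?_⟩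
      · rw [List.replicate_succ, List.cons_append, ← hdec]
      · rcases hrest with h1 | ⟨c, t', h1, h2, h3⟩
        · exact Or.inl h1
        · refine Or.inr ⟨c, t', h1, h2, ?_⟩
          have : sw413 (a :: a :: t) = sw413 (a :: t) := by simp [sw413]
          rw [this, h3]
    · refine ⟨0, b :: t, by simp, Or.inr ⟨b, t, rfl, fun hh => h hh.symm, ?_⟩⟩
      simp [sw413, h, Nat.add_comm]

/-- A word with few switches contains a constant run of length `N`. -/
lemma run413 (N : ℕ) : ∀ (j : ℕ) (l : List Bool), sw413 l = j →
    (j + 1) * N ≤ l.length →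
    ∃ l₁ : List Bool, ∃ a : Bool, ∃ l₂ : List Bool, l = l₁ ++ List.replicate N a ++ l₂ := by
  intro j
  induction j using Nat.strong_induction_on with
  | _ j ih =>
    intro l hsw hlen
    rcases Nat.eq_zero_or_pos N with hN | hN
    · exact ⟨[], true, l, by simp [hN]⟩
    have hl : l ≠ [] := by
      intro h; subst h; simp at hlen; omega
    obtain ⟨a, t, rfl⟩ := List.exists_cons_of_ne_nil hl
    obtain ⟨r, l', hdec, hrest⟩ := firstRun413 t a
    rcases hrest with rfl | ⟨b, t', rfl, hb, hsw'⟩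
    · -- whole list is a replicate of length r+1 ≥ N
      rw [List.append_nil] at hdec
      have hlen' : N ≤ r + 1 := by
        have h2 := congrArg List.length hdec
        simp only [List.length_cons, List.length_replicate] at h2
        simp only [List.length_cons] at hlen
        have hNle : N ≤ (j + 1) * N := Nat.le_mul_of_pos_left N (by omega)
        omega
      refine ⟨[], a, List.replicate (r + 1 - N) a, ?_⟩
      rw [hdec, List.nil_append, ← List.replicate_add]
      congr 1
      omega
    · by_cases hr : N ≤ r + 1
      · refine ⟨[], a, List.replicate (r + 1 - N) a ++ (b :: t'), ?_⟩
        rw [hdec, List.nil_append, ← List.append_assoc, ← List.replicate_add]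
        congr 2
        omega
      · -- recurse into l' = b :: t'
        have hj : j = sw413 (b :: t') + 1 := by rw [← hsw, hsw']
        have hlen2 : (sw413 (b :: t') + 1) * N ≤ (b :: t').length := by
          have h2 := congrArg List.length hdec
          simp only [List.length_cons, List.length_append,
            List.length_replicate] at h2
          simp only [List.length_cons] at hlen ⊢
          have hmul : (j + 1) * N = (sw413 (b :: t') + 1) * N + N := by
            rw [hj]; ring
          omega
        obtain ⟨l₁, c, l₂, hdec2⟩ :=
          ih (sw413 (b :: t')) (by omega) (b :: t') rfl hlen2
        exact ⟨List.replicate (r + 1) a ++ l₁, c, l₂, by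
          rw [hdec, hdec2]; simp [List.append_assoc]⟩

lemma wd413_eq_zero (L U : X →L[ℂ] X) (N : ℕ) (hLN : L ^ N = 0) (hUN : U ^ N = 0)
    (l : List Bool) (h : (sw413 l + 1) * N ≤ l.length) : wd413 L U l = 0 := by
  obtain ⟨l₁, a, l₂, rfl⟩ := run413 N (sw413 l) l rfl h
  rw [wd413_append, wd413_append, wd413_replicate]
  cases a <;> simp [hLN, hUN]

lemma norm_wd413_le (L U : X →L[ℂ] X) (ρ γ : ℝ) (hρ : 0 ≤ ρ) (hγ : 0 ≤ γ)
    (hLU : ∀ v : X, ‖L (U v)‖ ≤ ρ * ‖U v‖)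
    (hUL : ∀ v : X, ‖U (L v)‖ ≤ ρ * ‖L v‖)
    (hLL : ∀ v : X, ‖L (L v)‖ ≤ γ * ‖L v‖)
    (hUU : ∀ v : X, ‖U (U v)‖ ≤ γ * ‖U v‖)
    (hL : ∀ v : X, ‖L v‖ ≤ Real.sqrt (γ ^ 2 + ρ ^ 2) * ‖v‖)
    (hU : ∀ v : X, ‖U v‖ ≤ Real.sqrt (γ ^ 2 + ρ ^ 2) * ‖v‖) :
    ∀ (t : List Bool) (a : Bool) (v : X),
      ‖wd413 L U (a :: t) v‖ ≤
        γ ^ (t.length - sw413 (a :: t)) * ρ ^ (sw413 (a :: t)) *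
          (Real.sqrt (γ ^ 2 + ρ ^ 2) * ‖v‖) := by
  intro t
  induction t with
  | nil =>
    intro a v
    have : wd413 L U [a] v = (if a then L else U) v := by
      simp [wd413]
    rw [this]
    have hsw : sw413 [a] = 0 := rfl
    rw [hsw]
    simp only [Nat.zero_sub, pow_zero, one_mul, List.length_nil]
    cases a <;> simpa using (by first | exact hU v | exact hL v)
  | cons b t ih =>
    intro a v
    have hval : wd413 L U (a :: b :: t) v
        = (if a then L else U) ((if b then L else U) (wd413 L U t v)) := by
      cases a <;> cases b <;> simp [wd413, ContinuousLinearMap.mul_apply]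
    have hval2 : wd413 L U (b :: t) v = (if b then L else U) (wd413 L U t v) := by
      cases b <;> simp [wd413, ContinuousLinearMap.mul_apply]
    set x := wd413 L U t v with hx
    have hswle := sw413_le b t
    by_cases hab : a = b
    · have hstep : ‖(if a then L else U) ((if b then L else U) x)‖
          ≤ γ * ‖(if b then L else U) x‖ := by
        subst hab
        cases a <;> simpa using (by first | exact hUU x | exact hLL x)
      have hsw : sw413 (a :: b :: t) = sw413 (b :: t) := by simp [sw413, hab]
      have hpow : (b :: t).length - sw413 (a :: b :: t)
          = (t.length - sw413 (b :: t)) + 1 := by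
        rw [hsw]; simp only [List.length_cons]; omega
      calc ‖wd413 L U (a :: b :: t) v‖
          ≤ γ * ‖wd413 L U (b :: t) v‖ := by rw [hval, hval2]; exact hstep
        _ ≤ γ * (γ ^ (t.length - sw413 (b :: t)) * ρ ^ (sw413 (b :: t)) *
              (Real.sqrt (γ ^ 2 + ρ ^ 2) * ‖v‖)) :=
            mul_le_mul_of_nonneg_left (ih b v) hγ
        _ = γ ^ ((b :: t).length - sw413 (a :: b :: t)) *
              ρ ^ (sw413 (a :: b :: t)) * (Real.sqrt (γ ^ 2 + ρ ^ 2) * ‖v‖) := by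
            rw [hpow, hsw, pow_succ]; ring
    · have hstep : ‖(if a then L else U) ((if b then L else U) x)‖
          ≤ ρ * ‖(if b then L else U) x‖ := by
        cases a <;> cases b <;> simp_all <;>
          first | exact hUL x | exact hLU x
      have hsw : sw413 (a :: b :: t) = sw413 (b :: t) + 1 := by
        simp [sw413, hab, Nat.add_comm]
      have hpow : (b :: t).length - sw413 (a :: b :: t)
          = t.length - sw413 (b :: t) := by
        rw [hsw]; simp only [List.length_cons]; omega
      calc ‖wd413 L U (a :: b :: t) v‖
          ≤ ρ * ‖wd413 L U (b :: t) v‖ := by rw [hval, hval2]; exact hstep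
        _ ≤ ρ * (γ ^ (t.length - sw413 (b :: t)) * ρ ^ (sw413 (b :: t)) *
              (Real.sqrt (γ ^ 2 + ρ ^ 2) * ‖v‖)) :=
            mul_le_mul_of_nonneg_left (ih b v) hρ
        _ = γ ^ ((b :: t).length - sw413 (a :: b :: t)) *
              ρ ^ (sw413 (a :: b :: t)) * (Real.sqrt (γ ^ 2 + ρ ^ 2) * ‖v‖) := by
            rw [hpow, hsw, pow_succ]; ring
lemma expand413 (L U : X →L[ℂ] X) :
    ∀ m : ℕ, (L + U) ^ m = ∑ w : Fin m → Bool, wd413 L U (List.ofFn w) := by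
  intro m
  induction m with
  | zero => simp [wd413, List.ofFn_zero]
  | succ m ih =>
    have hre : ∑ w : Fin (m + 1) → Bool, wd413 L U (List.ofFn w)
        = ∑ p : Bool × (Fin m → Bool), wd413 L U (List.ofFn (Fin.cons p.1 p.2)) := by
      exact (Fintype.sum_equiv (Fin.consEquiv fun _ => Bool)
        (fun p => wd413 L U (List.ofFn (Fin.cons p.1 p.2)))
        (fun w => wd413 L U (List.ofFn w)) (fun p => rfl)).symm
    have hcons : ∀ (b : Bool) (w : Fin m → Bool),
        wd413 L U (List.ofFn (Fin.cons b w)) = (if b then L else U) * wd413 L U (List.ofFn w) := by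
      intro b w
      rw [List.ofFn_succ]
      simp [wd413]
    rw [pow_succ', ih, hre, Fintype.sum_prod_type, Fintype.sum_bool]
    simp only [hcons]
    rw [add_mul, Finset.mul_sum, Finset.mul_sum]
    simp

lemma sw413_ofFn : ∀ (m : ℕ) (w : Fin (m + 1) → Bool),
    sw413 (List.ofFn w)
      = (univ.filter fun i : Fin m => w i.castSucc ≠ w i.succ).card := by
  intro m
  induction m with
  | zero =>
    intro w
    rw [List.ofFn_succ]
    simp [sw413]
  | succ m ih =>
    intro w
    have h1 : List.ofFn w = w 0 :: List.ofFn (fun i : Fin (m + 1) => w i.succ) :=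
      List.ofFn_succ
    have h2 : List.ofFn (fun i : Fin (m + 1) => w i.succ)
        = w 1 :: List.ofFn (fun i : Fin m => w i.succ.succ) := by
      rw [List.ofFn_succ]
      simp [Fin.succ_zero_eq_one]
    have h3 : sw413 (List.ofFn w)
        = (if w 0 = w 1 then 0 else 1) + sw413 (List.ofFn (fun i : Fin (m + 1) => w i.succ)) := by
      rw [h1, h2]
      simp [sw413]
    have h4 := ih (fun i : Fin (m + 1) => w i.succ)
    rw [h3, h4, Finset.card_filter, Finset.card_filter, Fin.sum_univ_succ]
    simp only [Fin.succ_castSucc, Fin.castSucc_zero, Fin.succ_zero_eq_one]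
    by_cases h : w 0 = w 1 <;> simp [h]

lemma inj413 (k : ℕ) (w w' : Fin (k + 1) → Bool) (h0 : w 0 = w' 0)
    (hd : ∀ i : Fin k, ((w i.castSucc ≠ w i.succ) ↔ (w' i.castSucc ≠ w' i.succ))) :
    w = w' := by
  funext i
  induction i using Fin.induction with
  | zero => exact h0
  | succ i ihc =>
    have := hd i
    cases hc : w i.castSucc <;> cases hs : w i.succ <;>
      cases hs' : w' i.succ <;> simp_all

lemma card413 (k j : ℕ) :
    ((univ : Finset (Fin (k + 1) → Bool)).filter
        fun w => sw413 (List.ofFn w) = j).card ≤ 2 * k.choose j := by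
  have hcard : ((univ : Finset Bool) ×ˢ powersetCard j (univ : Finset (Fin k))).card
      = 2 * k.choose j := by
    rw [Finset.card_product, Finset.card_powersetCard]
    simp
  rw [← hcard]
  apply Finset.card_le_card_of_injOn
    (fun w => (w 0, univ.filter fun i : Fin k => w i.castSucc ≠ w i.succ))
  · intro w hw
    rw [Finset.mem_coe, Finset.mem_filter] at hw
    rw [Finset.mem_coe, Finset.mem_product, Finset.mem_powersetCard]
    refine ⟨Finset.mem_univ _, Finset.filter_subset _ _, ?_⟩
    rw [← sw413_ofFn]
    exact hw.2
  · intro w _ w' _ h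
    simp only [Prod.mk.injEq] at h
    apply inj413 k w w' h.1
    intro i
    have := Finset.ext_iff.mp h.2 i
    simpa using this
lemma core413 (L U : X →L[ℂ] X) (N : ℕ) (hN : 2 ≤ N)
    (hLN : L ^ N = 0) (hUN : U ^ N = 0) (ρ γ : ℝ) (hρ : 0 ≤ ρ) (hγ : 0 ≤ γ)
    (hLU : ∀ v : X, ‖L (U v)‖ ≤ ρ * ‖U v‖)
    (hUL : ∀ v : X, ‖U (L v)‖ ≤ ρ * ‖L v‖)
    (hLL : ∀ v : X, ‖L (L v)‖ ≤ γ * ‖L v‖)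
    (hUU : ∀ v : X, ‖U (U v)‖ ≤ γ * ‖U v‖)
    (hL : ∀ v : X, ‖L v‖ ≤ Real.sqrt (γ ^ 2 + ρ ^ 2) * ‖v‖)
    (hU : ∀ v : X, ‖U v‖ ≤ Real.sqrt (γ ^ 2 + ρ ^ 2) * ‖v‖)
    (s : ℕ) (hs : 1 ≤ s) (k : ℕ) (hk : s * N = k + 1) (v : X) :
    ‖((L + U) ^ (k + 1)) v‖ ≤
      ∑ j ∈ Icc s k, (2 * k.choose j : ℝ) *
        (γ ^ (k - j) * ρ ^ j * (Real.sqrt (γ ^ 2 + ρ ^ 2) * ‖v‖)) := by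
  set c := Real.sqrt (γ ^ 2 + ρ ^ 2) * ‖v‖ with hc
  have hc0 : 0 ≤ c := mul_nonneg (Real.sqrt_nonneg _) (norm_nonneg _)
  set F : ℕ → ℝ := fun j => if s ≤ j then γ ^ (k - j) * ρ ^ j * c else 0 with hF
  have hF0 : ∀ j, 0 ≤ F j := by
    intro j
    rw [hF]
    dsimp only
    split
    · positivity
    · exact le_rfl
  -- pointwise bound on words
  have key : ∀ w : Fin (k + 1) → Bool,
      ‖wd413 L U (List.ofFn w) v‖ ≤ F (sw413 (List.ofFn w)) := by
    intro w
    by_cases hsw : s ≤ sw413 (List.ofFn w)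
    · have h1 : List.ofFn w = w 0 :: List.ofFn (fun i : Fin k => w i.succ) :=
        List.ofFn_succ
      have hlen : (List.ofFn (fun i : Fin k => w i.succ)).length = k := by simp
      have := norm_wd413_le L U ρ γ hρ hγ hLU hUL hLL hUU hL hU
        (List.ofFn (fun i : Fin k => w i.succ)) (w 0) v
      rw [← h1, hlen] at this
      rw [hF]
      dsimp only
      rw [if_pos hsw]
      exact this
    · have hzero : wd413 L U (List.ofFn w) = 0 := by
        apply wd413_eq_zero L U N hLN hUN
        have hle : sw413 (List.ofFn w) + 1 ≤ s := by omega
        calc (sw413 (List.ofFn w) + 1) * N ≤ s * N := Nat.mul_le_mul_right N hle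
          _ = k + 1 := hk
          _ = (List.ofFn w).length := by simp
      rw [hzero]
      simpa using hF0 _
  -- sw value is at most k
  have hswk : ∀ w : Fin (k + 1) → Bool, sw413 (List.ofFn w) ∈ Finset.range (k + 1) := by
    intro w
    have h1 : List.ofFn w = w 0 :: List.ofFn (fun i : Fin k => w i.succ) :=
      List.ofFn_succ
    have := sw413_le (w 0) (List.ofFn (fun i : Fin k => w i.succ))
    rw [← h1] at this
    simp only [Finset.mem_range]
    have hlen : (List.ofFn (fun i : Fin k => w i.succ)).length = k := by simp
    omega
  calc ‖((L + U) ^ (k + 1)) v‖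
      = ‖∑ w : Fin (k + 1) → Bool, wd413 L U (List.ofFn w) v‖ := by
        rw [expand413 L U (k + 1), ContinuousLinearMap.sum_apply]
    _ ≤ ∑ w : Fin (k + 1) → Bool, ‖wd413 L U (List.ofFn w) v‖ :=
        norm_sum_le _ _
    _ ≤ ∑ w : Fin (k + 1) → Bool, F (sw413 (List.ofFn w)) :=
        Finset.sum_le_sum fun w _ => key w
    _ = ∑ j ∈ Finset.range (k + 1),
          ∑ w ∈ univ.filter (fun w : Fin (k + 1) → Bool => sw413 (List.ofFn w) = j), F j :=
        (Finset.sum_fiberwise_of_maps_to' (fun w _ => hswk w) F).symm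
    _ = ∑ j ∈ Finset.range (k + 1),
          (↑(univ.filter (fun w : Fin (k + 1) → Bool => sw413 (List.ofFn w) = j)).card) * F j := by
        apply Finset.sum_congr rfl
        intro j _
        rw [Finset.sum_const, nsmul_eq_mul]
    _ = ∑ j ∈ Icc s k,
          (↑(univ.filter (fun w : Fin (k + 1) → Bool => sw413 (List.ofFn w) = j)).card) * F j := by
        symm
        apply Finset.sum_subset
        · intro j hj
          rw [Finset.mem_Icc] at hj
          rw [Finset.mem_range]
          omega
        · intro j hjr hj
          rw [Finset.mem_range] at hjr
          rw [Finset.mem_Icc] at hj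
          have : ¬ s ≤ j := by omega
          rw [hF]
          dsimp only
          rw [if_neg this, mul_zero]
    _ ≤ ∑ j ∈ Icc s k, (2 * k.choose j : ℝ) * (γ ^ (k - j) * ρ ^ j * c) := by
        apply Finset.sum_le_sum
        intro j hj
        rw [Finset.mem_Icc] at hj
        have hFj : F j = γ ^ (k - j) * ρ ^ j * c := by
          rw [hF]; dsimp only; rw [if_pos hj.1]
        rw [hFj]
        apply mul_le_mul_of_nonneg_right
        · have := card413 k j
          exact_mod_cast this
        · positivity

end Aux413

/-- **Corollary 4.13 (higher-order-in-ρ estimate for `𝓣^{sN}`).** For continuous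
linear operators `L, U` on a complex normed space with `L ^ N = 0 = U ^ N` (`N ≥ 2`),
under the conclusions of Lemma 4.10, for every `s ≥ 1`,
`‖(L+U)^{sN} v‖ ≤ 2 √(γ²+ρ²) (∑_{j=s}^{sN-1} C(sN-1, j) γ^(sN-1-j) ρ^j) ‖v‖`. -/
theorem norm_add_pow_mul_apply_le {X : Type*} [NormedAddCommGroup X]
    [NormedSpace ℂ X] (L U : X →L[ℂ] X) (N : ℕ) (hN : 2 ≤ N)
    (hLN : L ^ N = 0) (hUN : U ^ N = 0) (ρ γ : ℝ) (hρ : 0 ≤ ρ) (hγ : 0 ≤ γ)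
    (hLU : ∀ v : X, ‖L (U v)‖ ≤ ρ * ‖U v‖)
    (hUL : ∀ v : X, ‖U (L v)‖ ≤ ρ * ‖L v‖)
    (hLL : ∀ v : X, ‖L (L v)‖ ≤ γ * ‖L v‖)
    (hUU : ∀ v : X, ‖U (U v)‖ ≤ γ * ‖U v‖)
    (hL : ∀ v : X, ‖L v‖ ≤ Real.sqrt (γ ^ 2 + ρ ^ 2) * ‖v‖)
    (hU : ∀ v : X, ‖U v‖ ≤ Real.sqrt (γ ^ 2 + ρ ^ 2) * ‖v‖)
    (s : ℕ) (hs : 1 ≤ s) (v : X) :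
    ‖((L + U) ^ (s * N)) v‖ ≤
      2 * Real.sqrt (γ ^ 2 + ρ ^ 2) *
        (∑ j ∈ Finset.Icc s (s * N - 1),
          ((s * N - 1).choose j : ℝ) * γ ^ (s * N - 1 - j) * ρ ^ j) * ‖v‖ := by
  have h2 : N ≤ s * N := Nat.le_mul_of_pos_left N (by omega)
  have hk : s * N = (s * N - 1) + 1 := by omega
  set k := s * N - 1 with hkdef
  calc ‖((L + U) ^ (s * N)) v‖
      = ‖((L + U) ^ (k + 1)) v‖ := by rw [← hk]
    _ ≤ ∑ j ∈ Finset.Icc s k, (2 * k.choose j : ℝ) *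
          (γ ^ (k - j) * ρ ^ j * (Real.sqrt (γ ^ 2 + ρ ^ 2) * ‖v‖)) :=
        core413 L U N hN hLN hUN ρ γ hρ hγ hLU hUL hLL hUU hL hU s hs k hk v
    _ = 2 * Real.sqrt (γ ^ 2 + ρ ^ 2) *
          (∑ j ∈ Finset.Icc s k,
            (k.choose j : ℝ) * γ ^ (k - j) * ρ ^ j) * ‖v‖ := by
        rw [Finset.mul_sum, Finset.sum_mul]
        apply Finset.sum_congr rfl
        intro j _
        ring
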